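/- Suppose μ has no atoms, μ(X) = ∞, and μ is doubling. Define d̃(x,y) = inf{μ(B) : B a closed ball containing x and y} and let B̃(x,r) = {y : d̃(x,y) ≤ r}. Then μ(B̃(x,r)) ≃ r, i.e., there is C > 0 with C^{-1}·r ≤ μ(B̃(x,r)) ≤ C·r for all x ∈ X and r > 0. -/

import Mathlib

open MeasureTheory Metric Filter

/-- If `μ` has no atoms, `μ(X) = ∞`, and `μ` is doubling, then for the quasi-metric
`d̃(x,y) = inf{μ(B) : B a closed ball containing x and y}` one has
`μ(B̃(x,r)) ≃ r`. -/
theorem dtilde_ball_measure_comparable_radius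
    {X : Type*} [MetricSpace X] [MeasurableSpace X] [BorelSpace X]
    (μ : Measure X)
    (hvol : ∀ (x : X) (r : ℝ), 0 < r → 0 < (μ (closedBall x r)).toReal)
    (hna : ∀ x : X, μ {x} = 0)
    (hinf : μ Set.univ = ⊤)
    (C : ℝ) (hC : 0 < C)
    (hdouble : ∀ (x : X) (r : ℝ), 0 < r →
      (μ (closedBall x (2 * r))).toReal ≤ C * (μ (closedBall x r)).toReal)
    (dt : X → X → ℝ)
    (hdt : ∀ x y : X, dt x y =
      sInf {m : ℝ | ∃ (z : X) (r : ℝ), x ∈ closedBall z r ∧ y ∈ closedBall z r ∧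
        m = (μ (closedBall z r)).toReal}) :
    ∃ C' > (0 : ℝ), ∀ (x : X) (r : ℝ), 0 < r →
      C'⁻¹ * r ≤ (μ {y : X | dt x y ≤ r}).toReal ∧
      (μ {y : X | dt x y ≤ r}).toReal ≤ C' * r := by
  classical
  -- finiteness of ball measures
  have hfin : ∀ (x : X) (r : ℝ), 0 < r → μ (closedBall x r) ≠ ⊤ := by
    intro x r hr
    exact ((ENNReal.toReal_pos_iff.mp (hvol x r hr)).2).ne
  -- monotonicity
  have hmono : ∀ (x : X) (r s : ℝ), 0 < r → r ≤ s →
      (μ (closedBall x r)).toReal ≤ (μ (closedBall x s)).toReal := by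
    intro x r s hr hrs
    exact ENNReal.toReal_mono (hfin x s (hr.trans_le hrs))
      (measure_mono (closedBall_subset_closedBall hrs))
  -- small balls have small measure
  have hsmall : ∀ (x : X) (ε : ℝ), 0 < ε → ∃ ρ > 0, (μ (closedBall x ρ)).toReal ≤ ε := by
    intro x ε hε
    set s : ℕ → Set X := fun n => closedBall x (1 / (n + 1)) with hs
    have hanti : Antitone s := by
      intro m n hmn
      apply closedBall_subset_closedBall
      apply one_div_le_one_div_of_le (by positivity)
      exact_mod_cast by exact_mod_cast add_le_add_left (Nat.cast_le.mpr hmn) 1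
    have hnm : ∀ n, NullMeasurableSet (s n) μ :=
      fun n => (isClosed_closedBall.measurableSet).nullMeasurableSet
    have hfin' : ∃ n, μ (s n) ≠ ⊤ := ⟨0, hfin x _ (by norm_num)⟩
    have hiInt : (⋂ n, s n) = {x} := by
      apply Set.Subset.antisymm
      · intro y hy
        simp only [Set.mem_iInter, hs, mem_closedBall] at hy
        have : dist y x ≤ 0 := by
          by_contra h
          push_neg at h
          obtain ⟨n, hn⟩ := exists_nat_one_div_lt h
          exact absurd (hy n) (by push_neg; exact_mod_cast hn)
        exact dist_le_zero.mp this
      · intro y hy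
        simp only [Set.mem_singleton_iff] at hy
        subst hy
        exact Set.mem_iInter.mpr fun n => mem_closedBall_self (by positivity)
    have htend : Tendsto (⇑μ ∘ s) atTop (nhds 0) := by
      have := MeasureTheory.tendsto_measure_iInter_atTop (μ := μ) hnm hanti hfin'
      rwa [hiInt, hna x] at this
    have : ∀ᶠ n in atTop, (μ (s n)) < ENNReal.ofReal ε :=
      htend.eventually (gt_mem_nhds (by simp [hε]))
    obtain ⟨n, hn⟩ := this.exists
    refine ⟨1 / (n + 1), by positivity, ?_⟩
    calc (μ (closedBall x (1 / (n + 1)))).toReal ≤ (ENNReal.ofReal ε).toReal :=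
          ENNReal.toReal_mono ENNReal.ofReal_ne_top hn.le
      _ = ε := ENNReal.toReal_ofReal hε.le
  -- big balls have big measure
  have hbig : ∀ (x : X) (M : ℝ), 0 < M → ∃ ρ > 0, M < (μ (closedBall x ρ)).toReal := by
    intro x M hM
    set s : ℕ → Set X := fun n => closedBall x (n + 1) with hs
    have hmon : Monotone s := fun m n hmn => closedBall_subset_closedBall
      (by exact_mod_cast add_le_add_left (Nat.cast_le.mpr hmn) 1)
    have hUn : (⋃ n, s n) = Set.univ := by
      apply Set.eq_univ_of_forall
      intro y
      obtain ⟨n, hn⟩ := exists_nat_ge (dist y x)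
      exact Set.mem_iUnion.mpr ⟨n, by simp only [hs, mem_closedBall]; linarith⟩
    have htend : Tendsto (⇑μ ∘ s) atTop (nhds ⊤) := by
      have := MeasureTheory.tendsto_measure_iUnion_atTop (μ := μ) hmon
      rwa [hUn, hinf] at this
    have : ∀ᶠ n in atTop, ENNReal.ofReal M < μ (s n) :=
      htend.eventually (lt_mem_nhds ENNReal.ofReal_lt_top)
    obtain ⟨n, hn⟩ := this.exists
    refine ⟨(n : ℝ) + 1, by positivity, ?_⟩
    have hfin'' : μ (s n) ≠ ⊤ := hfin x _ (by positivity)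
    show M < (μ (s n)).toReal
    rwa [← ENNReal.ofReal_lt_iff_lt_toReal hM.le hfin'']
  -- X is nonempty
  have hX : Nonempty X := by
    by_contra h
    rw [not_nonempty_iff] at h
    rw [Set.univ_eq_empty_iff.mpr h, measure_empty] at hinf
    exact ENNReal.zero_ne_top hinf
  -- C ≥ 1
  have hC1 : 1 ≤ C := by
    obtain ⟨x₀⟩ := hX
    have h1 := hvol x₀ 1 one_pos
    have h2 := hdouble x₀ 1 one_pos
    have h3 := hmono x₀ 1 (2 * 1) one_pos (by norm_num)
    nlinarith
  -- key lemma: the critical radius for threshold t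
  have key : ∀ (x : X) (t : ℝ), 0 < t → ∃ ρ₀ > 0,
      (∀ ρ, 0 < ρ → (μ (closedBall x ρ)).toReal ≤ t → ρ ≤ ρ₀) ∧
      (μ (closedBall x ρ₀)).toReal ≤ C * t ∧
      ∃ ρ > 0, (μ (closedBall x ρ)).toReal ≤ t ∧ t ≤ C * (μ (closedBall x ρ)).toReal := by
    intro x t ht
    set S : Set ℝ := {ρ : ℝ | 0 < ρ ∧ (μ (closedBall x ρ)).toReal ≤ t} with hS
    obtain ⟨ρs, hρs, hρsm⟩ := hsmall x t ht
    have hSne : S.Nonempty := ⟨ρs, hρs, hρsm⟩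
    obtain ⟨ρM, hρM, hρMm⟩ := hbig x t ht
    have hSbdd : BddAbove S := by
      refine ⟨ρM, fun ρ hρ => ?_⟩
      by_contra h
      push_neg at h
      exact absurd (hmono x ρM ρ hρM h.le) (by push_neg; exact hρ.2.trans_lt hρMm)
    set ρ₀ := sSup S with hρ₀
    have hρ₀pos : 0 < ρ₀ := lt_of_lt_of_le hρs (le_csSup hSbdd ⟨hρs, hρsm⟩)
    have hub : ∀ ρ, 0 < ρ → (μ (closedBall x ρ)).toReal ≤ t → ρ ≤ ρ₀ :=
      fun ρ h1 h2 => le_csSup hSbdd ⟨h1, h2⟩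
    obtain ⟨ρ, hρS, hρhalf⟩ := exists_lt_of_lt_csSup hSne (show ρ₀ / 2 < ρ₀ by linarith)
    obtain ⟨hρpos, hρm⟩ := hρS
    have h2ρ : ρ₀ < 2 * ρ := by linarith
    -- above ρ₀ the measure exceeds t
    have habove : t < (μ (closedBall x (2 * ρ))).toReal := by
      by_contra h
      push_neg at h
      exact absurd (hub (2 * ρ) (by linarith) h) (by push_neg; exact h2ρ)
    have hdρ := hdouble x ρ hρpos
    refine ⟨ρ₀, hρ₀pos, hub, ?_, ρ, hρpos, hρm, by linarith⟩
    calc (μ (closedBall x ρ₀)).toReal ≤ (μ (closedBall x (2 * ρ))).toReal :=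
          hmono x ρ₀ (2 * ρ) hρ₀pos h2ρ.le
      _ ≤ C * (μ (closedBall x ρ)).toReal := hdρ
      _ ≤ C * t := by nlinarith
  -- the comparability constant
  refine ⟨2 * C ^ 3, by positivity, ?_⟩
  intro x r hr
  -- the defining set for dt x y
  have hDne : ∀ y : X, Set.Nonempty {m : ℝ | ∃ (z : X) (s : ℝ), x ∈ closedBall z s ∧
      y ∈ closedBall z s ∧ m = (μ (closedBall z s)).toReal} := by
    intro y
    exact ⟨(μ (closedBall x (dist x y))).toReal, x, dist x y,
      mem_closedBall_self dist_nonneg, by simp [mem_closedBall, dist_comm], rfl⟩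
  have hDbdd : ∀ y : X, BddBelow {m : ℝ | ∃ (z : X) (s : ℝ), x ∈ closedBall z s ∧
      y ∈ closedBall z s ∧ m = (μ (closedBall z s)).toReal} := by
    intro y
    refine ⟨0, fun m hm => ?_⟩
    obtain ⟨z, s, _, _, rfl⟩ := hm
    exact ENNReal.toReal_nonneg
  -- Upper bound: B̃(x,r) ⊆ closedBall x ρ₀ for threshold 2C²r
  obtain ⟨ρ₀, hρ₀pos, hub, hmρ₀, -⟩ := key x (2 * C ^ 2 * r) (by positivity)
  have hsub : {y : X | dt x y ≤ r} ⊆ closedBall x ρ₀ := by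
    intro y hy
    simp only [Set.mem_setOf_eq, hdt] at hy
    have hlt : sInf {m : ℝ | ∃ (z : X) (s : ℝ), x ∈ closedBall z s ∧
        y ∈ closedBall z s ∧ m = (μ (closedBall z s)).toReal} < 2 * r := by linarith
    obtain ⟨m, hm, hmlt⟩ := exists_lt_of_csInf_lt (hDne y) hlt
    obtain ⟨z, s, hxz, hyz, rfl⟩ := hm
    rw [mem_closedBall] at hxz hyz
    have hs0 : 0 ≤ s := dist_nonneg.trans hxz
    rcases eq_or_lt_of_le hs0 with hs | hs
    · -- s = 0: then y = x
      have hxe : x = z := by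
        have := le_antisymm (hxz.trans hs.symm.le) dist_nonneg
        exact dist_eq_zero.mp this
      have hye : y = z := by
        have := le_antisymm (hyz.trans hs.symm.le) dist_nonneg
        exact dist_eq_zero.mp this
      rw [mem_closedBall, hye, ← hxe, dist_self]
      exact hρ₀pos.le
    · -- s > 0
      have hsub1 : closedBall x (2 * s) ⊆ closedBall z (2 * (2 * s)) := by
        intro w hw
        rw [mem_closedBall] at hw ⊢
        calc dist w z ≤ dist w x + dist x z := dist_triangle w x z
          _ ≤ 2 * s + s := add_le_add hw hxz
          _ ≤ 2 * (2 * s) := by linarith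
      have h1 : (μ (closedBall x (2 * s))).toReal ≤ (μ (closedBall z (2 * (2 * s)))).toReal :=
        ENNReal.toReal_mono (hfin z _ (by linarith)) (measure_mono hsub1)
      have h2 := hdouble z (2 * s) (by linarith)
      have h3 := hdouble z s hs
      have hm2s : (μ (closedBall x (2 * s))).toReal ≤ 2 * C ^ 2 * r := by nlinarith
      have h2sle : 2 * s ≤ ρ₀ := hub (2 * s) (by linarith) hm2s
      rw [mem_closedBall]
      calc dist y x ≤ dist y z + dist z x := dist_triangle y z x
        _ ≤ s + s := add_le_add hyz (dist_comm z x ▸ hxz)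
        _ ≤ 2 * s := by linarith
        _ ≤ ρ₀ := h2sle
  have hBfin : μ {y : X | dt x y ≤ r} ≠ ⊤ :=
    ne_top_of_le_ne_top (hfin x ρ₀ hρ₀pos) (measure_mono hsub)
  have hupper : (μ {y : X | dt x y ≤ r}).toReal ≤ 2 * C ^ 3 * r := by
    calc (μ {y : X | dt x y ≤ r}).toReal ≤ (μ (closedBall x ρ₀)).toReal :=
          ENNReal.toReal_mono (hfin x ρ₀ hρ₀pos) (measure_mono hsub)
      _ ≤ C * (2 * C ^ 2 * r) := hmρ₀
      _ = 2 * C ^ 3 * r := by ring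
  -- Lower bound
  obtain ⟨ρ₁, hρ₁pos, -, -, ρ, hρpos, hρle, hρge⟩ := key x r hr
  have hsub2 : closedBall x ρ ⊆ {y : X | dt x y ≤ r} := by
    intro y hy
    simp only [Set.mem_setOf_eq, hdt]
    calc sInf {m : ℝ | ∃ (z : X) (s : ℝ), x ∈ closedBall z s ∧
          y ∈ closedBall z s ∧ m = (μ (closedBall z s)).toReal}
        ≤ (μ (closedBall x ρ)).toReal :=
          csInf_le (hDbdd y) ⟨x, ρ, mem_closedBall_self hρpos.le, hy, rfl⟩
      _ ≤ r := hρle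
  have hlower : (2 * C ^ 3)⁻¹ * r ≤ (μ {y : X | dt x y ≤ r}).toReal := by
    have h1 : (μ (closedBall x ρ)).toReal ≤ (μ {y : X | dt x y ≤ r}).toReal :=
      ENNReal.toReal_mono hBfin (measure_mono hsub2)
    have h2 : (2 * C ^ 3)⁻¹ * r ≤ (μ (closedBall x ρ)).toReal := by
      rw [inv_mul_le_iff₀ (by positivity)]
      nlinarith [hvol x ρ hρpos]
    linarith
  exact ⟨hlower, hupper⟩
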